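/- Let G be a finite simple connected graph with m ≥ 1 edges. Then ∑_{i ∈ V(G)} (2^{deg(i)} − 1) − m = 2m − 1 if and only if G is a path graph (the line graph on m+1 vertices with edges {1,2},{2,3},...,{m,m+1}). -/

import Mathlib

open Finset

open SimpleGraph

section helpers

variable {V : Type*} {G : SimpleGraph V}

lemma cross_lemma {l : List V} : ∀ {u v : V} (_ : G.Walk u v), u ∉ l → v ∈ l →
    ∃ x y, G.Adj x y ∧ x ∈ l ∧ y ∉ l := by
  intro u v p
  induction p with
  | nil => intro hu hv; exact absurd hv hu
  | @cons a b c h q ih =>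
    intro hu hv
    by_cases hb : b ∈ l
    · exact ⟨b, a, h.symm, hb, hu⟩
    · exact ih hb hv

lemma getVert_eq_support_getElem {u v : V} (p : G.Walk u v) :
    ∀ (i : ℕ) (h : i < p.support.length), p.getVert i = p.support[i] := by
  induction p with
  | nil => intro i h; simp [SimpleGraph.Walk.support_nil] at h; subst h; simp
  | cons hadj q ih =>
    intro i h
    cases i with
    | zero => simp
    | succ n =>
      rw [SimpleGraph.Walk.getVert_cons q hadj (Nat.succ_ne_zero n)]
      simp only [SimpleGraph.Walk.support_cons]
      rw [List.getElem_cons_succ]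
      exact ih n (by simpa [SimpleGraph.Walk.support_cons] using h)

lemma SimpleGraph.Walk.IsPath.getVert_injOn' {u v : V} {p : G.Walk u v} (hp : p.IsPath) :
    ∀ i ≤ p.length, ∀ j ≤ p.length, p.getVert i = p.getVert j → i = j := by
  intro i hi j hj hij
  have hl := p.length_support
  rw [_root_.getVert_eq_support_getElem p i (by omega), _root_.getVert_eq_support_getElem p j (by omega)] at hij
  exact (List.Nodup.getElem_inj_iff hp.support_nodup).mp hij

lemma exists_hamiltonian_path [Fintype V] [DecidableEq V] (G : SimpleGraph V)
    [DecidableRel G.Adj] (hconn : G.Connected) (hdeg : ∀ v, G.degree v ≤ 2) :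
    ∃ (a b : V) (p : G.Walk a b), p.IsPath ∧ ∀ w, w ∈ p.support := by
  classical
  obtain ⟨v0⟩ := hconn.nonempty
  set P : ℕ → Prop := fun n => ∃ (a b : V) (p : G.Walk a b), p.IsPath ∧ p.length = n with hP
  have hP0 : P 0 := ⟨v0, v0, SimpleGraph.Walk.nil, SimpleGraph.Walk.IsPath.nil, rfl⟩
  set N := Nat.findGreatest P (Fintype.card V) with hN
  have hPN : P N := Nat.findGreatest_spec (Nat.zero_le _) hP0
  obtain ⟨a, b, p, hp, hlen⟩ := hPN
  refine ⟨a, b, p, hp, ?_⟩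
  by_contra hw
  push_neg at hw
  obtain ⟨w, hwsup⟩ := hw
  -- get a crossing edge
  have hmem : a ∈ p.support := p.start_mem_support
  obtain ⟨x, y, hxy, hx, hy⟩ := cross_lemma ((hconn.preconnected w a).some) hwsup hmem
  -- a longer path contradicts maximality
  have extend : ∀ {c d : V} (q : G.Walk c d), q.IsPath → q.length = N →
      (∀ z, z ∈ q.support ↔ z ∈ p.support) → G.Adj y c → False := by
    intro c d q hq hql hqs hyc
    have hq' : (SimpleGraph.Walk.cons hyc q).IsPath := by
      rw [SimpleGraph.Walk.cons_isPath_iff]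
      exact ⟨hq, fun h => hy ((hqs y).mp h)⟩
    have hlt : (SimpleGraph.Walk.cons hyc q).length ≤ Fintype.card V := by
      have := hq'.support_nodup.length_le_card
      rw [SimpleGraph.Walk.length_support] at this
      omega
    have : (SimpleGraph.Walk.cons hyc q).length ≤ N := Nat.le_findGreatest (P := P) hlt ⟨y, d, _, hq', rfl⟩
    rw [SimpleGraph.Walk.length_cons, hql] at this
    omega
  by_cases hxa : x = a
  · subst hxa
    exact extend p hp hlen (fun z => Iff.rfl) hxy.symm
  by_cases hxb : x = b
  · subst hxb
    exact extend p.reverse ((SimpleGraph.Walk.isPath_reverse_iff p).mpr hp)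
      (by rw [SimpleGraph.Walk.length_reverse, hlen])
      (fun z => by rw [SimpleGraph.Walk.support_reverse, List.mem_reverse]) hxy.symm
  -- x is an internal vertex : degree ≥ 3, contradiction
  · set q := p.takeUntil x hx with hq
    set r := p.dropUntil x hx with hr
    have hspec : q.append r = p := p.take_spec hx
    have hqp : q.IsPath := hp.takeUntil hx
    have hrp : r.IsPath := hp.dropUntil hx
    have hqnil : ¬ q.Nil := SimpleGraph.Walk.not_nil_of_ne (fun h => hxa h.symm)
    have hrnil : ¬ r.Nil := SimpleGraph.Walk.not_nil_of_ne hxb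
    have hqrevnil : ¬ q.reverse.Nil := by
      rw [SimpleGraph.Walk.nil_iff_length_eq, SimpleGraph.Walk.length_reverse,
        ← SimpleGraph.Walk.nil_iff_length_eq] at *
      exact hqnil
    set z1 := q.reverse.getVert 1 with hz1
    set z2 := r.getVert 1 with hz2
    have hadj1 : G.Adj x z1 := SimpleGraph.Walk.adj_snd hqrevnil
    have hadj2 : G.Adj x z2 := SimpleGraph.Walk.adj_snd hrnil
    have hz1mem : z1 ∈ q.support := by
      have : z1 ∈ q.reverse.support := by
        rw [SimpleGraph.Walk.mem_support_iff_exists_getVert]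
        refine ⟨1, rfl, ?_⟩
        rw [SimpleGraph.Walk.length_reverse]
        rw [SimpleGraph.Walk.nil_iff_length_eq] at hqnil
        omega
      rwa [SimpleGraph.Walk.support_reverse, List.mem_reverse] at this
    have hz2mem : z2 ∈ r.support.tail := by
      have hmem2 : z2 ∈ r.support := by
        rw [SimpleGraph.Walk.mem_support_iff_exists_getVert]
        refine ⟨1, rfl, ?_⟩
        rw [SimpleGraph.Walk.nil_iff_length_eq] at hrnil
        omega
      have hne : z2 ≠ x := by
        intro h
        have := hrp.getVert_injOn' 1 (by rw [SimpleGraph.Walk.nil_iff_length_eq] at hrnil; omega)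
          0 (Nat.zero_le _) (by rw [SimpleGraph.Walk.getVert_zero, ← hz2, h])
        omega
      rw [SimpleGraph.Walk.support_eq_cons] at hmem2
      rcases List.mem_cons.mp hmem2 with h | h
      · exact absurd h hne
      · exact h
    have hdisj : List.Disjoint q.support r.support.tail := by
      have := hp.support_nodup
      rw [← hspec, SimpleGraph.Walk.support_append] at this
      exact List.disjoint_of_nodup_append this
    have hz12 : z1 ≠ z2 := fun h => hdisj hz1mem (h ▸ hz2mem)
    have hyz1 : y ≠ z1 := by
      intro h
      apply hy
      rw [← hspec, SimpleGraph.Walk.support_append]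
      exact List.mem_append_left _ (h ▸ hz1mem)
    have hyz2 : y ≠ z2 := by
      intro h
      apply hy
      rw [← hspec, SimpleGraph.Walk.support_append]
      exact List.mem_append_right _ (h ▸ hz2mem)
    have hsub : ({y, z1, z2} : Finset V) ⊆ G.neighborFinset x := by
      intro t ht
      simp only [Finset.mem_insert, Finset.mem_singleton] at ht
      rw [SimpleGraph.mem_neighborFinset]
      rcases ht with rfl | rfl | rfl
      · exact hxy
      · exact hadj1
      · exact hadj2
    have hcard : ({y, z1, z2} : Finset V).card = 3 := by
      rw [Finset.card_insert_of_notMem (by simp [hyz1, hyz2]),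
        Finset.card_insert_of_notMem (by simp [hz12]), Finset.card_singleton]
    have := Finset.card_le_card hsub
    rw [hcard] at this
    have := hdeg x
    rw [SimpleGraph.degree] at this
    omega


lemma card_le_edge_card_add_one [Fintype V] [DecidableEq V] (G : SimpleGraph V)
    [DecidableRel G.Adj] (hconn : G.Connected) :
    Fintype.card V ≤ G.edgeFinset.card + 1 := by
  classical
  obtain ⟨r⟩ := hconn.nonempty
  have H : ∀ w : V, w ≠ r → ∃ x, G.Adj w x ∧ G.dist x r + 1 = G.dist w r := by
    intro w hw
    obtain ⟨p, hp⟩ := (hconn.preconnected w r).exists_walk_length_eq_dist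
    cases p with
    | nil => exact absurd rfl hw
    | cons h q =>
      refine ⟨_, h, le_antisymm ?_ ?_⟩
      · have h1 : G.dist _ r ≤ q.length := SimpleGraph.dist_le q
        simp only [SimpleGraph.Walk.length_cons] at hp
        omega
      · obtain ⟨q', hq'⟩ := (hconn.preconnected _ r).exists_walk_length_eq_dist
        have := SimpleGraph.dist_le (SimpleGraph.Walk.cons h q')
        simp only [SimpleGraph.Walk.length_cons, hq'] at this
        omega
  choose x hadj hdist using H
  have hcard : (Finset.univ.erase r).card ≤ G.edgeFinset.card := by
    apply Finset.card_le_card_of_injOn (fun w => if h : w = r then s(r, r) else s(w, x w h))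
    · intro w hw
      simp only [Finset.mem_coe, Finset.mem_erase, Finset.mem_univ, and_true] at hw
      beta_reduce
      rw [dif_neg hw]
      rw [Finset.mem_coe, SimpleGraph.mem_edgeFinset, SimpleGraph.mem_edgeSet]
      exact hadj w hw
    · intro a ha b hb hab
      simp only [Finset.mem_coe, Finset.mem_erase, Finset.mem_univ, and_true] at ha hb
      simp only [dif_neg ha, dif_neg hb, Sym2.eq_iff] at hab
      rcases hab with ⟨h1, h2⟩ | ⟨h1, h2⟩
      · exact h1
      · exfalso
        have da := hdist a ha
        have db := hdist b hb
        rw [h2] at da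
        rw [← h1] at db
        omega
  rwa [Finset.card_erase_of_mem (Finset.mem_univ r), Finset.card_univ,
    Nat.sub_le_iff_le_add] at hcard


variable {V2 : Type*}

section LE
variable {V : Type*} [Fintype V] [DecidableEq V] {G : SimpleGraph V} [DecidableRel G.Adj]
  {m : ℕ} {f : ℕ → V}

section LinEnum
variable (hinj : ∀ i ≤ m, ∀ j ≤ m, f i = f j → i = j)
  (hadj : ∀ x y, G.Adj x y ↔ ∃ i, i < m ∧ s(x, y) = s(f i, f (i + 1)))

include hinj hadj in
lemma linEnum_adj_iff {j : ℕ} (hj : j ≤ m) (y : V) :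
    G.Adj (f j) y ↔ (j < m ∧ y = f (j + 1)) ∨ (0 < j ∧ y = f (j - 1)) := by
  rw [hadj]
  constructor
  · rintro ⟨i, hi, he⟩
    rw [Sym2.eq_iff] at he
    rcases he with ⟨h1, h2⟩ | ⟨h1, h2⟩
    · have : j = i := hinj j hj i (by omega) h1
      subst this
      exact Or.inl ⟨hi, h2⟩
    · have : j = i + 1 := hinj j hj (i + 1) (by omega) h1
      right
      constructor
      · omega
      · rw [this]; simpa using h2
  · rintro (⟨h1, rfl⟩ | ⟨h1, rfl⟩)
    · exact ⟨j, h1, rfl⟩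
    · refine ⟨j - 1, by omega, ?_⟩
      have hj1 : j - 1 + 1 = j := by omega
      rw [hj1, Sym2.eq_swap]

include hinj hadj in
lemma linEnum_degree {j : ℕ} (hj : j ≤ m) :
    G.degree (f j) = (if j < m then 1 else 0) + (if 0 < j then 1 else 0) := by
  have hnb : G.neighborFinset (f j) =
      (if j < m then {f (j + 1)} else ∅) ∪ (if 0 < j then {f (j - 1)} else ∅) := by
    ext y
    rw [SimpleGraph.mem_neighborFinset, linEnum_adj_iff hinj hadj hj]
    split_ifs with h1 h2 h2 <;> simp [h1, h2]
  rw [SimpleGraph.degree, hnb]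
  split_ifs with h1 h2 h2
  · rw [Finset.card_union_of_disjoint, Finset.card_singleton, Finset.card_singleton]
    rw [Finset.disjoint_singleton]
    intro h
    have := hinj (j + 1) (by omega) (j - 1) (by omega) h
    omega
  · simp
  · simp
  · simp

include hinj hadj in
lemma linEnum_sum (hsurj : ∀ v : V, ∃ i ≤ m, f i = v) (hm1 : 1 ≤ m) :
    (∑ i : V, ((2 : ℤ) ^ G.degree i - 1)) = 3 * m - 1 := by
  have hbij : Function.Bijective (fun i : Fin (m + 1) => f i.val) := by
    constructor
    · intro i j hij
      exact Fin.ext (hinj i.val (by omega) j.val (by omega) hij)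
    · intro v
      obtain ⟨i, hi, rfl⟩ := hsurj v
      exact ⟨⟨i, by omega⟩, rfl⟩
  set e := Equiv.ofBijective _ hbij with he
  rw [← Equiv.sum_comp e (fun v => ((2 : ℤ) ^ G.degree v - 1))]
  have hterm : ∀ i : Fin (m + 1),
      (2 : ℤ) ^ G.degree (e i) - 1 = if i.val = 0 ∨ i.val = m then 1 else 3 := by
    intro i
    have : e i = f i.val := rfl
    rw [this, linEnum_degree hinj hadj (by omega)]
    split_ifs with h h1 h2 h3 <;> norm_num <;> omega
  rw [Finset.sum_congr rfl (fun i _ => hterm i)]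
  rw [Fin.sum_univ_eq_sum_range (fun k => if k = 0 ∨ k = m then (1 : ℤ) else 3)]
  rw [Finset.sum_ite, Finset.sum_const, Finset.sum_const]
  have h1 : (Finset.range (m + 1)).filter (fun k => k = 0 ∨ k = m) = {0, m} := by
    ext k
    simp only [Finset.mem_filter, Finset.mem_range, Finset.mem_insert, Finset.mem_singleton]
    omega
  have h2 : ((Finset.range (m + 1)).filter (fun k => ¬(k = 0 ∨ k = m))).card = m - 1 := by
    rw [Finset.filter_not, Finset.card_sdiff_of_subset (Finset.filter_subset _ _), h1,
      Finset.card_range, Finset.card_insert_of_notMem (by simp; omega), Finset.card_singleton]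
    omega
  rw [h1, h2]
  rw [Finset.card_insert_of_notMem (by simp; omega), Finset.card_singleton]
  simp only [nsmul_eq_mul]
  push_cast
  omega

include hinj hadj in
lemma linEnum_iso (hsurj : ∀ v : V, ∃ i ≤ m, f i = v) :
    Nonempty (G ≃g SimpleGraph.pathGraph (m + 1)) := by
  have hbij : Function.Bijective (fun i : Fin (m + 1) => f i.val) := by
    constructor
    · intro i j hij
      exact Fin.ext (hinj i.val (by omega) j.val (by omega) hij)
    · intro v
      obtain ⟨i, hi, rfl⟩ := hsurj v
      exact ⟨⟨i, by omega⟩, rfl⟩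
  set e := Equiv.ofBijective _ hbij with he
  refine ⟨(RelIso.mk e ?_).symm⟩
  intro i j
  show G.Adj (f i.val) (f j.val) ↔ (SimpleGraph.pathGraph (m + 1)).Adj i j
  rw [linEnum_adj_iff hinj hadj (by omega), SimpleGraph.pathGraph_adj]
  constructor
  · rintro (⟨h1, h2⟩ | ⟨h1, h2⟩)
    · left
      have := hinj j.val (by omega) (i.val + 1) (by omega) h2
      omega
    · right
      have := hinj j.val (by omega) (i.val - 1) (by omega) h2
      omega
  · rintro (h | h)
    · left
      refine ⟨by omega, ?_⟩
      congr 1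
      omega
    · right
      refine ⟨by omega, ?_⟩
      congr 1
      omega
end LinEnum

end LE
end helpers

theorem stmt2 {V : Type*} [Fintype V] [DecidableEq V] (G : SimpleGraph V)
    [DecidableRel G.Adj] (m : ℕ) (hm : G.edgeFinset.card = m)
    (hconn : G.Connected) (hm1 : 1 ≤ m) :
    (∑ i : V, ((2 : ℤ) ^ G.degree i - 1)) - m = 2 * m - 1 ↔
      Nonempty (G ≃g SimpleGraph.pathGraph (m + 1)) := by
  constructor
  · -- hard direction
    intro hsum
    -- degree sum
    have hdegsum : ∑ v : V, G.degree v = 2 * m := by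
      rw [SimpleGraph.sum_degrees_eq_twice_card_edges, hm]
    -- every vertex has positive degree
    have hdpos : ∀ v : V, 1 ≤ G.degree v := by
      intro v
      have hne : ∃ w : V, w ≠ v := by
        have : G.edgeFinset.Nonempty := by
          rw [← Finset.card_pos, hm]; omega
        obtain ⟨e, he⟩ := this
        induction e with
        | h a b =>
          rw [SimpleGraph.mem_edgeFinset, SimpleGraph.mem_edgeSet] at he
          by_cases h : a = v
          · exact ⟨b, by rw [← h]; exact (G.ne_of_adj he).symm⟩
          · exact ⟨a, h⟩
      obtain ⟨w, hw⟩ := hne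
      obtain ⟨p⟩ := hconn.preconnected v w
      have hnil : ¬ p.Nil := SimpleGraph.Walk.not_nil_of_ne (Ne.symm hw)
      exact (G.degree_pos_iff_exists_adj v).mpr ⟨_, SimpleGraph.Walk.adj_snd hnil⟩
    -- power inequalities
    have pow2 : ∀ d : ℕ, 2 * d ≤ 2 ^ d := by
      intro d
      induction d with
      | zero => simp
      | succ n ih =>
        have h2 : 1 ≤ 2 ^ n := Nat.one_le_two_pow
        rw [pow_succ]
        omega
    have pow2' : ∀ d : ℕ, 3 ≤ d → 2 * d + 1 ≤ 2 ^ d := by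
      intro d hd
      induction d with
      | zero => omega
      | succ n ih =>
        rcases Nat.lt_or_ge n 3 with h3 | h3
        · have hn : n = 2 := by omega
          subst hn
          norm_num
        · have := ih h3
          rw [pow_succ]
          omega
    have htermle : ∀ v : V, (G.degree v : ℤ) - 1 ≤ (2 : ℤ) ^ G.degree v - 1 - G.degree v := by
      intro v
      have := pow2 (G.degree v)
      have hc : ((2 : ℕ) ^ G.degree v : ℤ) = (2 : ℤ) ^ G.degree v := by push_cast; ring
      omega
    have hS : (∑ i : V, ((2 : ℤ) ^ G.degree i - 1)) = 3 * m - 1 := by omega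
    set n := Fintype.card V with hn
    have hdsumZ : ∑ v : V, (G.degree v : ℤ) = 2 * m := by
      rw [← Nat.cast_sum]
      exact_mod_cast congrArg (Nat.cast : ℕ → ℤ) hdegsum
    have hsum2 : ∑ v : V, ((2 : ℤ) ^ G.degree v - 1 - G.degree v) = m - 1 := by
      rw [Finset.sum_sub_distrib, hS, hdsumZ]
      ring
    have hsum3 : ∑ v : V, ((G.degree v : ℤ) - 1) = 2 * m - n := by
      rw [Finset.sum_sub_distrib, hdsumZ, Finset.sum_const, Finset.card_univ]
      simp
      exact hn.symm
    have hnge : m + 1 ≤ n := by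
      have hle : ∑ v : V, ((G.degree v : ℤ) - 1) ≤
          ∑ v : V, ((2 : ℤ) ^ G.degree v - 1 - G.degree v) :=
        Finset.sum_le_sum (fun v _ => htermle v)
      rw [hsum2, hsum3] at hle
      omega
    have hnle : n ≤ m + 1 := by rw [hn, ← hm]; exact card_le_edge_card_add_one G hconn
    have hneq : n = m + 1 := le_antisymm hnle hnge
    -- termwise equality : all degrees ≤ 2
    have hdeg : ∀ v : V, G.degree v ≤ 2 := by
      intro v
      by_contra h3
      push_neg at h3
      have hstrict : ∑ v : V, ((G.degree v : ℤ) - 1) <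
          ∑ v : V, ((2 : ℤ) ^ G.degree v - 1 - G.degree v) := by
        apply Finset.sum_lt_sum (fun v _ => htermle v)
        refine ⟨v, Finset.mem_univ v, ?_⟩
        have := pow2' (G.degree v) h3
        have hc : ((2 : ℕ) ^ G.degree v : ℤ) = (2 : ℤ) ^ G.degree v := by push_cast; ring
        omega
      rw [hsum2, hsum3] at hstrict
      omega
    -- Hamiltonian path
    obtain ⟨a, b, p, hp, hsup⟩ := exists_hamiltonian_path G hconn hdeg
    have hsuplen : p.support.length = n := by
      have h1 : p.support.toFinset = Finset.univ :=
        Finset.eq_univ_of_forall (fun v => List.mem_toFinset.mpr (hsup v))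
      have h2 := List.toFinset_card_of_nodup hp.support_nodup
      rw [h1, Finset.card_univ] at h2
      omega
    have hplen : p.length = m := by
      have := p.length_support
      omega
    -- all edges of G are edges of p
    have hedges : p.edges.toFinset = G.edgeFinset := by
      apply Finset.eq_of_subset_of_card_le
      · intro e he
        rw [List.mem_toFinset] at he
        rw [SimpleGraph.mem_edgeFinset]
        exact p.edges_subset_edgeSet he
      · rw [hm, List.toFinset_card_of_nodup hp.isTrail.edges_nodup,
          SimpleGraph.Walk.length_edges, hplen]
    have hadj : ∀ x y, G.Adj x y ↔ ∃ i, i < m ∧ s(x, y) = s(p.getVert i, p.getVert (i + 1)) := by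
      intro x y
      rw [← SimpleGraph.mem_edgeSet, ← SimpleGraph.mem_edgeFinset, ← hedges, List.mem_toFinset,
        ← SimpleGraph.Walk.mem_edges_toSubgraph, SimpleGraph.Subgraph.mem_edgeSet,
        SimpleGraph.Walk.toSubgraph_adj_iff]
      constructor
      · rintro ⟨i, he, hi⟩
        exact ⟨i, by omega, he.symm⟩
      · rintro ⟨i, hi, he⟩
        exact ⟨i, he.symm, by omega⟩
    have hinj : ∀ i ≤ m, ∀ j ≤ m, p.getVert i = p.getVert j → i = j := by
      intro i hi j hj
      exact hp.getVert_injOn' i (by omega) j (by omega)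
    have hsurj : ∀ v : V, ∃ i ≤ m, p.getVert i = v := by
      intro v
      obtain ⟨i, hgv, hile⟩ := SimpleGraph.Walk.mem_support_iff_exists_getVert.mp (hsup v)
      exact ⟨i, by omega, hgv⟩
    exact linEnum_iso hinj hadj hsurj
  · -- easy direction
    rintro ⟨h⟩
    set f : ℕ → V := fun i => h.symm ⟨min i m, by omega⟩ with hf
    have hfval : ∀ (i : ℕ) (hi : i ≤ m), f i = h.symm ⟨i, Nat.lt_succ_of_le hi⟩ := by
      intro i hi
      simp only [hf]
      congr 1
      exact Fin.ext (by simp [Nat.min_eq_left hi])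
    have hinj : ∀ i ≤ m, ∀ j ≤ m, f i = f j → i = j := by
      intro i hi j hj hij
      rw [hfval i hi, hfval j hj] at hij
      have := h.symm.injective hij
      simpa [Fin.ext_iff] using this
    have hsurj : ∀ v : V, ∃ i ≤ m, f i = v := by
      intro v
      refine ⟨(h v).val, by have := (h v).is_lt; omega, ?_⟩
      rw [hfval _ (by have := (h v).is_lt; omega)]
      have heta : (⟨(h v).val, by omega⟩ : Fin (m + 1)) = h v := Fin.ext rfl
      rw [heta]
      exact h.symm_apply_apply v
    have hadj : ∀ x y, G.Adj x y ↔ ∃ i, i < m ∧ s(x, y) = s(f i, f (i + 1)) := by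
      intro x y
      rw [← h.map_rel_iff, SimpleGraph.pathGraph_adj]
      constructor
      · rintro (hc | hc)
        · refine ⟨(h x).val, by have := (h y).is_lt; omega, ?_⟩
          rw [hfval _ (by have := (h x).is_lt; omega), hfval _ (by have := (h y).is_lt; omega)]
          have hx' : (⟨(h x).val, by omega⟩ : Fin (m + 1)) = h x := Fin.ext rfl
          have hy' : (⟨(h x).val + 1, by omega⟩ : Fin (m + 1)) = h y := Fin.ext hc
          rw [hx', hy']
          simp
        · refine ⟨(h y).val, by have := (h x).is_lt; omega, ?_⟩
          rw [hfval _ (by have := (h y).is_lt; omega), hfval _ (by have := (h x).is_lt; omega)]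
          have hx' : (⟨(h y).val, by omega⟩ : Fin (m + 1)) = h y := Fin.ext rfl
          have hy' : (⟨(h y).val + 1, by omega⟩ : Fin (m + 1)) = h x := Fin.ext hc
          rw [hx', hy']
          rw [Sym2.eq_swap]
          simp
      · rintro ⟨i, hi, he⟩
        have hstep : (SimpleGraph.pathGraph (m + 1)).Adj ⟨i, by omega⟩ ⟨i + 1, by omega⟩ := by
          rw [SimpleGraph.pathGraph_adj]
          left; rfl
        rw [hfval _ (by omega), hfval _ (by omega)] at he
        rw [Sym2.eq_iff] at he
        rcases he with ⟨h1, h2⟩ | ⟨h1, h2⟩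
        · rw [h1, h2]
          simpa using hstep
        · rw [h1, h2]
          simpa using hstep.symm
    have := linEnum_sum hinj hadj hsurj
    omega
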